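/- Let P_v(x) and P_w(x) be relatively prime univariate polynomials over a field K of characteristic zero, of degrees N_1+1 and N_2+1 respectively with N_1 ≤ N_2. Let μ = (μ_0,...,μ_{N_2−N_1}) be indeterminates and Q_μ(x) = (Σ_i μ_i x^i)·P_v(x) + P_w(x). Then the discriminant of Q_μ with respect to x is a nonzero polynomial in K[μ_0,...,μ_{N_2−N_1}]; in particular there exists μ ∈ K^{N_2−N_1+1} such that Q_μ is square-free. -/

import Mathlib

open Polynomial

private lemma aux_XC {k : Type*} [Field k] {a b : k}
    (h : RatFunc.X * RatFunc.C a + RatFunc.C b = 0) : a = 0 ∧ b = 0 := by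
  have h2 : algebraMap (Polynomial k) (RatFunc k)
      (Polynomial.X * Polynomial.C a + Polynomial.C b) = 0 := by
    rw [map_add, map_mul, RatFunc.algebraMap_X, RatFunc.algebraMap_C, RatFunc.algebraMap_C, h]
  have h3 : (Polynomial.X * Polynomial.C a + Polynomial.C b : Polynomial k) = 0 :=
    RatFunc.algebraMap_injective k (by rw [h2, map_zero])
  have h4 : (Polynomial.C a * Polynomial.X + Polynomial.C b : Polynomial k) = 0 := by
    rw [← h3]; ring
  constructor
  · have := congrArg (fun p => Polynomial.coeff p 1) h4
    simpa using this
  · have := congrArg (fun p => Polynomial.coeff p 0) h4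
    simpa using this

private lemma pencil {k : Type*} [Field k] [CharZero k] [IsAlgClosed k]
    (A B : Polynomial k) (hA : 0 < A.natDegree) (hcop : IsCoprime A B) :
    (Polynomial.C RatFunc.X * A.map (algebraMap k (RatFunc k))
      + B.map (algebraMap k (RatFunc k))).Separable := by
  classical
  set L := RatFunc k with hL
  set ι : k →+* L := algebraMap k (RatFunc k) with hι
  set T : L := RatFunc.X with hT
  set Q : Polynomial L := Polynomial.C T * A.map ι + B.map ι with hQdef
  have key0 : ∀ a b : k, T * ι a + ι b = 0 → a = 0 ∧ b = 0 := by
    intro a b h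
    refine aux_XC (a := a) (b := b) ?_
    rwa [hι, RatFunc.algebraMap_eq_C] at h
  have hQ' : Polynomial.derivative Q = Polynomial.C T * (Polynomial.derivative A).map ι
      + (Polynomial.derivative B).map ι := by
    rw [hQdef]
    simp [Polynomial.derivative_map]
  rw [Polynomial.separable_def]
  by_contra hncop
  -- common factor, common root in the algebraic closure
  set g := EuclideanDomain.gcd Q (Polynomial.derivative Q) with hg
  have hgu : ¬ IsUnit g := fun h => hncop (EuclideanDomain.gcd_isUnit_iff.mp h)
  have hgdeg : g.degree ≠ 0 := fun h => hgu (Polynomial.isUnit_iff_degree_eq_zero.mpr h)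
  set Ω := AlgebraicClosure L with hΩ
  obtain ⟨α, hα⟩ := IsAlgClosed.exists_aeval_eq_zero Ω g hgdeg
  have hQα0 : Polynomial.aeval α Q = 0 := by
    obtain ⟨c, hc⟩ := EuclideanDomain.gcd_dvd_left Q (Polynomial.derivative Q)
    rw [hc, map_mul, hα, zero_mul]
  have hQ'α0 : Polynomial.aeval α (Polynomial.derivative Q) = 0 := by
    obtain ⟨c, hc⟩ := EuclideanDomain.gcd_dvd_right Q (Polynomial.derivative Q)
    rw [hc, map_mul, hα, zero_mul]
  set ψ : L →+* Ω := algebraMap L Ω with hψ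
  set φ : k →+* Ω := ψ.comp ι with hφ
  have expand : ∀ p q : Polynomial k,
      Polynomial.aeval α (Polynomial.C T * p.map ι + q.map ι)
        = ψ T * Polynomial.eval₂ φ α p + Polynomial.eval₂ φ α q := by
    intro p q
    simp [Polynomial.aeval_def, Polynomial.eval₂_map, hφ, hψ]
  rw [hQdef, expand] at hQα0
  rw [hQ', expand] at hQ'α0
  -- the Wronskian
  set W : Polynomial k := A * Polynomial.derivative B - Polynomial.derivative A * B with hWdef
  have hW0 : W ≠ 0 := by
    intro h
    have hAB : A * Polynomial.derivative B = Polynomial.derivative A * B := by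
      rw [← sub_eq_zero]; exact h
    have hdvd' : A ∣ Polynomial.derivative A :=
      hcop.dvd_of_dvd_mul_right ⟨Polynomial.derivative B, hAB.symm⟩
    have hA'0 : Polynomial.derivative A = 0 :=
      Polynomial.eq_zero_of_dvd_of_natDegree_lt hdvd' (Polynomial.natDegree_derivative_lt hA.ne')
    have := Polynomial.natDegree_eq_zero_of_derivative_eq_zero hA'0
    omega
  have hb : Polynomial.eval₂ φ α B = -(ψ T * Polynomial.eval₂ φ α A) :=
    eq_neg_of_add_eq_zero_right hQα0
  have hb' : Polynomial.eval₂ φ α (Polynomial.derivative B)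
      = -(ψ T * Polynomial.eval₂ φ α (Polynomial.derivative A)) :=
    eq_neg_of_add_eq_zero_right hQ'α0
  have hWα : Polynomial.eval₂ φ α W = 0 := by
    rw [hWdef]
    simp only [Polynomial.eval₂_sub, Polynomial.eval₂_mul, hb, hb']
    ring
  -- α comes from k
  have hWmap : (W.map φ).eval α = 0 := by rw [Polynomial.eval_map]; exact hWα
  have hroots : α ∈ (W.map φ).roots := by
    rw [Polynomial.mem_roots (Polynomial.map_ne_zero hW0)]
    exact hWmap
  rw [(IsAlgClosed.splits W).roots_map_of_injective φ.injective] at hroots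
  obtain ⟨r, -, rfl⟩ := Multiset.mem_map.mp hroots
  rw [Polynomial.eval₂_at_apply, Polynomial.eval₂_at_apply] at hQα0
  have hL0 : T * ι (A.eval r) + ι (B.eval r) = 0 := by
    apply ψ.injective
    rw [map_add, map_mul, map_zero]
    exact hQα0
  obtain ⟨ha0, hb0⟩ := key0 _ _ hL0
  obtain ⟨u, v, huv⟩ := hcop
  have := congrArg (Polynomial.eval r) huv
  simp [ha0, hb0] at this


private lemma sep_frac {R : Type*} [CommRing R] [IsDomain R] {L : Type*} [Field L] (θ : R →+* L)
    (hθ : Function.Injective θ) (Q : Polynomial R) (h : (Q.map θ).Separable) :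
    (Q.map (algebraMap R (FractionRing R))).Separable := by
  have hcomp : (IsFractionRing.lift hθ).comp (algebraMap R (FractionRing R)) = θ :=
    IsLocalization.lift_comp _
  rw [← Polynomial.separable_map (IsFractionRing.lift hθ), Polynomial.map_map, hcomp]
  exact h

private lemma bezout_clear {R : Type*} [CommRing R] [IsDomain R] (Q : Polynomial R)
    (h : (Q.map (algebraMap R (FractionRing R))).Separable) :
    ∃ Δ : R, Δ ≠ 0 ∧ ∃ A B : Polynomial R,
      A * Q + B * Polynomial.derivative Q = Polynomial.C Δ := by
  classical
  rw [Polynomial.separable_def] at h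
  obtain ⟨a, b, hab⟩ := h
  obtain ⟨ca, hca⟩ := IsLocalization.integerNormalization_map_to_map (nonZeroDivisors R) a
  obtain ⟨cb, hcb⟩ := IsLocalization.integerNormalization_map_to_map (nonZeroDivisors R) b
  refine ⟨(ca : R) * (cb : R),
    mul_ne_zero (nonZeroDivisors.ne_zero ca.2) (nonZeroDivisors.ne_zero cb.2),
    IsLocalization.integerNormalization (nonZeroDivisors R) a * Polynomial.C (cb : R),
    IsLocalization.integerNormalization (nonZeroDivisors R) b * Polynomial.C (ca : R), ?_⟩
  apply Polynomial.map_injective (algebraMap R (FractionRing R)) (IsFractionRing.injective _ _)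
  have hsm : ∀ (c : R) (p : Polynomial (FractionRing R)),
      c • p = Polynomial.C (algebraMap R (FractionRing R) c) * p := by
    intro c p
    rw [← algebraMap_smul (FractionRing R) c p, Polynomial.smul_eq_C_mul]
  rw [Polynomial.map_add, Polynomial.map_mul, Polynomial.map_mul, Polynomial.map_mul,
    Polynomial.map_mul, hca, hcb, ← Polynomial.derivative_map, Polynomial.map_C,
    Polynomial.map_C, Polynomial.map_C, hsm, hsm,
    show (algebraMap R (FractionRing R)) ((ca : R) * (cb : R))
      = algebraMap R (FractionRing R) (ca : R) * algebraMap R (FractionRing R) (cb : R)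
      from map_mul _ _ _, Polynomial.C_mul]
  linear_combination (Polynomial.C (algebraMap R (FractionRing R) (ca : R))
    * Polynomial.C (algebraMap R (FractionRing R) (cb : R))) * hab

set_option maxHeartbeats 4000000 in
theorem stmt13 {K : Type*} [Field K] [CharZero K] (N₁ N₂ : ℕ) (hN : N₁ ≤ N₂)
    (Pv Pw : Polynomial K)
    (hv : Pv.natDegree = N₁ + 1) (hw : Pw.natDegree = N₂ + 1)
    (hcop : IsCoprime Pv Pw) :
    (∃ Δ : MvPolynomial (Fin (N₂ - N₁ + 1)) K, Δ ≠ 0 ∧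
      ∀ μ : Fin (N₂ - N₁ + 1) → K,
        ¬ Squarefree
            ((∑ i : Fin (N₂ - N₁ + 1), Polynomial.C (μ i) * Polynomial.X ^ (i : ℕ)) * Pv
              + Pw) →
        MvPolynomial.eval μ Δ = 0) ∧
    ∃ μ : Fin (N₂ - N₁ + 1) → K,
      Squarefree
        ((∑ i : Fin (N₂ - N₁ + 1), Polynomial.C (μ i) * Polynomial.X ^ (i : ℕ)) * Pv
          + Pw) := by
  classical
  set d := N₂ - N₁ with hd
  set QR : Polynomial (MvPolynomial (Fin (d + 1)) K) :=
    (∑ i : Fin (d + 1), Polynomial.C (MvPolynomial.X i) * Polynomial.X ^ (i : ℕ))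
      * Pv.map MvPolynomial.C + Pw.map MvPolynomial.C with hQR
  haveI : CharZero (FractionRing (MvPolynomial (Fin d) K)) := charZero_of_injective_ringHom
    (f := (algebraMap (MvPolynomial (Fin d) K)
      (FractionRing (MvPolynomial (Fin d) K))).comp MvPolynomial.C)
    (((IsFractionRing.injective (MvPolynomial (Fin d) K)
      (FractionRing (MvPolynomial (Fin d) K)))).comp (MvPolynomial.C_injective _ K))
  haveI : CharZero (AlgebraicClosure (FractionRing (MvPolynomial (Fin d) K))) :=
    charZero_of_injective_ringHom
      (f := algebraMap (FractionRing (MvPolynomial (Fin d) K))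
        (AlgebraicClosure (FractionRing (MvPolynomial (Fin d) K))))
      (algebraMap (FractionRing (MvPolynomial (Fin d) K))
        (AlgebraicClosure (FractionRing (MvPolynomial (Fin d) K)))).injective
  set ρ : MvPolynomial (Fin d) K →+*
      AlgebraicClosure (FractionRing (MvPolynomial (Fin d) K)) :=
    (algebraMap (FractionRing (MvPolynomial (Fin d) K))
        (AlgebraicClosure (FractionRing (MvPolynomial (Fin d) K)))).comp
      (algebraMap (MvPolynomial (Fin d) K) (FractionRing (MvPolynomial (Fin d) K))) with hρ
  have ρinj : Function.Injective ρ :=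
    (algebraMap (FractionRing (MvPolynomial (Fin d) K))
      (AlgebraicClosure (FractionRing (MvPolynomial (Fin d) K)))).injective.comp
      (IsFractionRing.injective (MvPolynomial (Fin d) K)
        (FractionRing (MvPolynomial (Fin d) K)))
  set θ : MvPolynomial (Fin (d + 1)) K →+*
      RatFunc (AlgebraicClosure (FractionRing (MvPolynomial (Fin d) K))) :=
    ((algebraMap (Polynomial (AlgebraicClosure (FractionRing (MvPolynomial (Fin d) K))))
        (RatFunc (AlgebraicClosure (FractionRing (MvPolynomial (Fin d) K))))).comp
      ((Polynomial.mapRingHom ρ).comp (MvPolynomial.finSuccEquiv K d).toAlgHom.toRingHom))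
    with hθ
  have θinj : Function.Injective θ := by
    rw [hθ]
    simp only [RingHom.coe_comp, Polynomial.coe_mapRingHom, AlgHom.toRingHom_eq_coe,
      RingHom.coe_coe, AlgHom.coe_coe]
    exact (RatFunc.algebraMap_injective _).comp
      ((Polynomial.map_injective ρ ρinj).comp (MvPolynomial.finSuccEquiv K d).injective)
  set ι : AlgebraicClosure (FractionRing (MvPolynomial (Fin d) K)) →+*
      RatFunc (AlgebraicClosure (FractionRing (MvPolynomial (Fin d) K))) :=
    algebraMap _ _ with hι
  set κ : K →+* AlgebraicClosure (FractionRing (MvPolynomial (Fin d) K)) :=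
    ρ.comp MvPolynomial.C with hκ
  have κinj : Function.Injective κ := ρinj.comp (MvPolynomial.C_injective _ K)
  set A : Polynomial (AlgebraicClosure (FractionRing (MvPolynomial (Fin d) K))) :=
    Pv.map κ with hA
  set fk : Polynomial (AlgebraicClosure (FractionRing (MvPolynomial (Fin d) K))) :=
    ∑ i : Fin d, Polynomial.C (ρ (MvPolynomial.X i)) * Polynomial.X ^ ((i : ℕ) + 1) with hfk
  set B : Polynomial (AlgebraicClosure (FractionRing (MvPolynomial (Fin d) K))) :=
    Pw.map κ + A * fk with hB
  -- the map of QR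
  have hfsC : ∀ a : K, (MvPolynomial.finSuccEquiv K d) (MvPolynomial.C a)
      = Polynomial.C (MvPolynomial.C a) := by
    intro a
    rw [MvPolynomial.finSuccEquiv_apply]
    simp
  have hθC : θ.comp MvPolynomial.C = ι.comp κ := by
    ext a
    simp [hθ, hι, hκ, hfsC, RatFunc.algebraMap_C, RatFunc.algebraMap_eq_C]
  have hPvmap : (Pv.map (MvPolynomial.C : K →+* MvPolynomial (Fin (d + 1)) K)).map θ
      = A.map ι := by
    rw [hA, Polynomial.map_map, Polynomial.map_map, hθC]
  have hPwmap : (Pw.map (MvPolynomial.C : K →+* MvPolynomial (Fin (d + 1)) K)).map θ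
      = (Pw.map κ).map ι := by
    rw [Polynomial.map_map, Polynomial.map_map, hθC]
  have hsum : (∑ i : Fin (d + 1), Polynomial.C (MvPolynomial.X i)
      * Polynomial.X ^ (i : ℕ) : Polynomial (MvPolynomial (Fin (d + 1)) K)).map θ
      = Polynomial.C RatFunc.X + fk.map ι := by
    rw [← Polynomial.coe_mapRingHom, map_sum]
    rw [Fin.sum_univ_succ]
    congr 1
    · simp [hθ, MvPolynomial.finSuccEquiv_X_zero, RatFunc.algebraMap_X]
    · rw [hfk, ← Polynomial.coe_mapRingHom, map_sum]
      refine Finset.sum_congr rfl fun i _ => ?_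
      simp [hθ, hι, MvPolynomial.finSuccEquiv_X_succ, RatFunc.algebraMap_C,
        RatFunc.algebraMap_eq_C, Fin.val_succ]
  have hmap : QR.map θ = Polynomial.C RatFunc.X * A.map ι + B.map ι := by
    rw [hQR, Polynomial.map_add, Polynomial.map_mul, hPvmap, hPwmap, hsum, hB,
      Polynomial.map_add, Polynomial.map_mul]
    ring
  -- separability over the fraction field
  have hsepL : (QR.map θ).Separable := by
    rw [hmap]
    refine pencil A B ?_ ?_
    · rw [hA, Polynomial.natDegree_map_eq_of_injective κinj, hv]; omega
    · have h1 : IsCoprime (Pv.map κ) (Pw.map κ) := by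
        have := hcop.map (Polynomial.mapRingHom κ)
        simpa using this
      exact h1.add_mul_left_right fk
  have hsepF : (QR.map (algebraMap (MvPolynomial (Fin (d + 1)) K)
      (FractionRing (MvPolynomial (Fin (d + 1)) K)))).Separable :=
    sep_frac θ θinj QR hsepL
  obtain ⟨Δ, hΔ0, A', B', hkey⟩ := bezout_clear QR hsepF
  -- specialization
  have hspec : ∀ μ : Fin (d + 1) → K,
      QR.map (MvPolynomial.eval μ)
        = (∑ i : Fin (d + 1), Polynomial.C (μ i) * Polynomial.X ^ (i : ℕ)) * Pv + Pw := by
    intro μ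
    have hid : (MvPolynomial.eval μ).comp
        (MvPolynomial.C : K →+* MvPolynomial (Fin (d + 1)) K) = RingHom.id K := by
      ext x; simp
    have hsum2 : (∑ i : Fin (d + 1), Polynomial.C (MvPolynomial.X i)
        * Polynomial.X ^ (i : ℕ) : Polynomial (MvPolynomial (Fin (d + 1)) K)).map
          (MvPolynomial.eval μ)
        = ∑ i : Fin (d + 1), Polynomial.C (μ i) * Polynomial.X ^ (i : ℕ) := by
      rw [← Polynomial.coe_mapRingHom, map_sum]
      refine Finset.sum_congr rfl fun i _ => ?_
      simp
    rw [hQR, Polynomial.map_add, Polynomial.map_mul, Polynomial.map_map, Polynomial.map_map,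
      hid, Polynomial.map_id, Polynomial.map_id, hsum2]
  have key : ∀ μ : Fin (d + 1) → K, MvPolynomial.eval μ Δ ≠ 0 →
      Squarefree ((∑ i : Fin (d + 1), Polynomial.C (μ i) * Polynomial.X ^ (i : ℕ)) * Pv + Pw) := by
    intro μ hμ g hg
    have hspecμ := hspec μ
    set Qμ : Polynomial K :=
      (∑ i : Fin (d + 1), Polynomial.C (μ i) * Polynomial.X ^ (i : ℕ)) * Pv + Pw with hQμ
    have hgQ : g ∣ Qμ := (dvd_mul_left g g).trans hg
    have hgQ' : g ∣ Polynomial.derivative Qμ := by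
      obtain ⟨h, hh⟩ := hg
      rw [hh, Polynomial.derivative_mul]
      have h1 : g ∣ Polynomial.derivative (g * g) := by
        rw [Polynomial.derivative_mul]
        exact dvd_add (dvd_mul_left g _) (dvd_mul_right g _)
      exact dvd_add (h1.mul_right h) ((dvd_mul_right g g).mul_right _)
    have hmapped := congrArg (Polynomial.map (MvPolynomial.eval μ)) hkey
    rw [Polynomial.map_add, Polynomial.map_mul, Polynomial.map_mul, Polynomial.map_C,
      ← Polynomial.derivative_map, hspecμ] at hmapped
    have hdvdC : g ∣ Polynomial.C (MvPolynomial.eval μ Δ) := by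
      rw [← hmapped]
      exact dvd_add (hgQ.mul_left _) (hgQ'.mul_left _)
    exact isUnit_of_dvd_unit hdvdC (Polynomial.isUnit_C.mpr hμ.isUnit)
  refine ⟨⟨Δ, hΔ0, ?_⟩, ?_⟩
  · intro μ hnsq
    by_contra h0
    exact hnsq (key μ h0)
  · have hex : ∃ μ : Fin (d + 1) → K, MvPolynomial.eval μ Δ ≠ 0 := by
      by_contra hno
      push_neg at hno
      apply hΔ0
      refine MvPolynomial.funext fun x => ?_
      rw [hno x, map_zero]
    obtain ⟨μ, hμ⟩ := hex
    exact ⟨μ, key μ hμ⟩
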